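/- In the setting of the projected-gradient-to-distance proposition: if x⁺⁺ is the perturbed gradient mapping with parameters η ≥ 2M, σ ≥ 0, prox-center x̄, and the M-descent inequality holds at x, then ‖x⁺⁺ - x‖ ≤ 2‖x*(σ;x̄) - x‖, where x*(σ;x̄) minimizes f + φ + (σ/2)‖· - x̄‖² over X. -/

import Mathlib

open scoped RealInnerProductSpace

lemma grad_ineq_17 {n : ℕ} (f : EuclideanSpace ℝ (Fin n) → ℝ)
    (hf : ConvexOn ℝ Set.univ f) (hdiff : Differentiable ℝ f)
    (x y : EuclideanSpace ℝ (Fin n)) :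
    f x + ⟪gradient f x, y - x⟫ ≤ f y := by
  set g : ℝ → ℝ := fun t => f (AffineMap.lineMap x y t) with hg
  have hgconv : ConvexOn ℝ Set.univ g := by
    have := hf.comp_affineMap (AffineMap.lineMap x y : ℝ →ᵃ[ℝ] _)
    simp only [Set.preimage_univ] at this
    exact this
  have hline : HasDerivAt (fun t : ℝ => AffineMap.lineMap x y t) (y - x) 0 := by
    have h1 : HasDerivAt (fun t : ℝ => t • (y - x)) ((1:ℝ) • (y - x)) 0 :=
      (hasDerivAt_id 0).smul_const (y - x)
    have h2 := h1.add_const x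
    have heq : (fun t : ℝ => AffineMap.lineMap x y t) = fun t : ℝ => t • (y - x) + x := by
      funext t
      simp only [AffineMap.lineMap_apply_module]
      module
    rw [heq]
    simpa using h2
  have hgrad : HasFDerivAt f
      ((InnerProductSpace.toDual ℝ _) (gradient f x)) (AffineMap.lineMap x y (0:ℝ)) := by
    have := ((hdiff x).hasGradientAt)
    rw [hasGradientAt_iff_hasFDerivAt] at this
    simpa using this
  have hgd : HasDerivAt g ⟪gradient f x, y - x⟫ 0 := by
    have h3 := hgrad.comp_hasDerivAt 0 hline
    simp only [InnerProductSpace.toDual_apply_apply] at h3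
    exact h3
  have hslope := hgconv.le_slope_of_hasDerivAt (Set.mem_univ (0:ℝ)) (Set.mem_univ (1:ℝ))
    one_pos hgd
  have hle : ⟪gradient f x, y - x⟫ ≤ g 1 - g 0 := by
    simpa [slope_def_field] using hslope
  have h0 : g 0 = f x := by simp [g]
  have h1' : g 1 = f y := by simp [g]
  rw [h0, h1'] at hle
  linarith

theorem stmt_17 {n : ℕ} (X : Set (EuclideanSpace ℝ (Fin n)))
    (hXne : X.Nonempty) (hXclosed : IsClosed X) (hXconv : Convex ℝ X)
    (f φ : EuclideanSpace ℝ (Fin n) → ℝ)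
    (hf : ConvexOn ℝ Set.univ f) (hdiff : Differentiable ℝ f)
    (hφ : ConvexOn ℝ Set.univ φ)
    (σ M η : ℝ) (hσ : 0 ≤ σ) (hM : 0 < M) (hη : η ≥ 2 * M)
    (x xb xpp xstar : EuclideanSpace ℝ (Fin n))
    (hxpp : xpp ∈ X ∧ ∀ u ∈ X,
      ⟪gradient f x, xpp⟫ + φ xpp + σ / 2 * ‖xpp - xb‖ ^ 2 + η / 2 * ‖xpp - x‖ ^ 2 ≤
      ⟪gradient f x, u⟫ + φ u + σ / 2 * ‖u - xb‖ ^ 2 + η / 2 * ‖u - x‖ ^ 2)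
    (hdesc : f xpp - f x - ⟪gradient f x, xpp - x⟫ ≤ M / 2 * ‖xpp - x‖ ^ 2)
    (hxstar : xstar ∈ X ∧ ∀ u ∈ X,
      f xstar + φ xstar + σ / 2 * ‖xstar - xb‖ ^ 2 ≤
      f u + φ u + σ / 2 * ‖u - xb‖ ^ 2) :
    ‖xpp - x‖ ≤ 2 * ‖xstar - x‖ := by
  obtain ⟨hxppX, hopt⟩ := hxpp
  obtain ⟨hxsX, hsopt⟩ := hxstar
  have h1 := hopt xstar hxsX
  have h2 := hsopt xpp hxppX
  have h3 := grad_ineq_17 f hf hdiff x xstar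
  have e1 : ⟪gradient f x, xpp - x⟫ = ⟪gradient f x, xpp⟫ - ⟪gradient f x, x⟫ :=
    inner_sub_right _ _ _
  have e2 : ⟪gradient f x, xstar - x⟫ = ⟪gradient f x, xstar⟫ - ⟪gradient f x, x⟫ :=
    inner_sub_right _ _ _
  have key : (η / 2 - M / 2) * ‖xpp - x‖ ^ 2 ≤ η / 2 * ‖xstar - x‖ ^ 2 := by
    nlinarith [h1, h2, h3, hdesc, e1, e2]
  have hA : (0:ℝ) ≤ ‖xpp - x‖ := norm_nonneg _
  have hB : (0:ℝ) ≤ ‖xstar - x‖ := norm_nonneg _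
  have hA2 : ‖xpp - x‖ ^ 2 ≤ 2 * ‖xstar - x‖ ^ 2 := by
    nlinarith [key, sq_nonneg ‖xpp - x‖, sq_nonneg ‖xstar - x‖]
  nlinarith [hA2, hA, hB, sq_nonneg (‖xpp - x‖ - 2 * ‖xstar - x‖)]
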